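/- 2D discrete Poincaré inequality: let (w_{ij}) for 0 ≤ i ≤ M+1, 0 ≤ j ≤ N+1 vanish on the boundary indices, with mesh widths h_i, k_j > 0 (i = 1..M, j = 1..N) satisfying Σ h_i = Σ k_j = 1 and adjacent distances h_{i+1/2}, k_{j+1/2} > 0 with Σ_{i=0}^M h_{i+1/2} = 1. Then ‖w‖_{L²} := (Σ_{i,j} h_i k_j w_{ij}²)^{1/2} ≤ ‖w‖_{1,τ} := (Σ_{i,j} k_j (w_{i+1,j}-w_{ij})²/h_{i+1/2} + Σ_{i,j} h_i (w_{i,j+1}-w_{ij})²/k_{j+1/2})^{1/2}. -/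
import Mathlib


open Finset

/-- 2D discrete Poincaré inequality: `‖w‖_{L²} ≤ ‖w‖_{1,τ}`. -/
theorem discrete_2d_poincare
    (M N : ℕ) (hcell kcell hhalf khalf : ℕ → ℝ) (w : ℕ → ℕ → ℝ)
    (hcpos : ∀ i, 1 ≤ i → i ≤ M → 0 < hcell i)
    (kcpos : ∀ j, 1 ≤ j → j ≤ N → 0 < kcell j)
    (hhpos : ∀ i ≤ M, 0 < hhalf i)
    (khpos : ∀ j ≤ N, 0 < khalf j)
    (hsum : ∑ i ∈ Icc 1 M, hcell i = 1)
    (ksum : ∑ j ∈ Icc 1 N, kcell j = 1)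
    (hhsum : ∑ i ∈ range (M + 1), hhalf i = 1)
    (khsum : ∑ j ∈ range (N + 1), khalf j = 1)
    (hbd : ∀ i ≤ M + 1, ∀ j ≤ N + 1,
      (i = 0 ∨ i = M + 1 ∨ j = 0 ∨ j = N + 1) → w i j = 0) :
    Real.sqrt (∑ i ∈ Icc 1 M, ∑ j ∈ Icc 1 N, hcell i * kcell j * (w i j) ^ 2) ≤
      Real.sqrt
        ((∑ i ∈ range (M + 1), ∑ j ∈ range (N + 1),
            kcell j * (w (i + 1) j - w i j) ^ 2 / hhalf i)
          + ∑ i ∈ range (M + 1), ∑ j ∈ range (N + 1),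
              hcell i * (w i (j + 1) - w i j) ^ 2 / khalf j) := by
  apply Real.sqrt_le_sqrt
  -- S j : the 1D energy in direction i for fixed j
  set S : ℕ → ℝ := fun j => ∑ p ∈ range (M + 1), (w (p + 1) j - w p j) ^ 2 / hhalf p with hS
  -- 1D Poincaré: for 1 ≤ j ≤ N and i ≤ M, (w i j)^2 ≤ S j
  have key : ∀ j, 1 ≤ j → j ≤ N → ∀ i ≤ M, (w i j) ^ 2 ≤ S j := by
    intro j hj1 hjN i hiM
    have hSnn : ∀ p ∈ range (M + 1), 0 ≤ (w (p + 1) j - w p j) ^ 2 / hhalf p := by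
      intro p hp
      exact div_nonneg (sq_nonneg _) (hhpos p (by simpa using Nat.lt_succ_iff.mp (mem_range.mp hp))).le
    rcases Nat.eq_zero_or_pos i with hi0 | hi1
    · subst hi0
      rw [hbd 0 (by omega) j (by omega) (Or.inl rfl)]
      simpa using sum_nonneg hSnn
    · have htel : w i j = ∑ p ∈ range i, (w (p + 1) j - w p j) := by
        rw [Finset.sum_range_sub (fun p => w p j)]
        rw [hbd 0 (by omega) j (by omega) (Or.inl rfl), sub_zero]
      have hpos : ∀ p ∈ range i, 0 < hhalf p := fun p hp =>
        hhpos p (by have := mem_range.mp hp; omega)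
      have hcs := Finset.sq_sum_div_le_sum_sq_div (range i)
        (fun p => w (p + 1) j - w p j) hpos
      have hss : ∑ p ∈ range i, hhalf p ≤ 1 := by
        rw [← hhsum]
        exact sum_le_sum_of_subset_of_nonneg
          (by exact range_subset_range.mpr (by omega))
          (fun p hp _ => (hhpos p (by have := mem_range.mp hp; omega)).le)
      have hspos : 0 < ∑ p ∈ range i, hhalf p :=
        sum_pos (fun p hp => hpos p hp) (nonempty_range_iff.mpr (by omega))
      calc (w i j) ^ 2 = (∑ p ∈ range i, (w (p + 1) j - w p j)) ^ 2 := by rw [htel]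
        _ ≤ (∑ p ∈ range i, (w (p + 1) j - w p j)) ^ 2 / ∑ p ∈ range i, hhalf p := by
            rw [le_div_iff₀ hspos]
            nlinarith [sq_nonneg (∑ p ∈ range i, (w (p + 1) j - w p j))]
        _ ≤ ∑ p ∈ range i, (w (p + 1) j - w p j) ^ 2 / hhalf p := hcs
        _ ≤ S j := sum_le_sum_of_subset_of_nonneg (range_subset_range.mpr (by omega))
            (fun p hp _ => hSnn p hp)
  -- second term is nonnegative
  have hterm2 : 0 ≤ ∑ i ∈ range (M + 1), ∑ j ∈ range (N + 1),
      hcell i * (w i (j + 1) - w i j) ^ 2 / khalf j := by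
    apply sum_nonneg; intro i hi; apply sum_nonneg; intro j hj
    have hjN : j ≤ N := Nat.lt_succ_iff.mp (mem_range.mp hj)
    rcases Nat.eq_zero_or_pos i with hi0 | hi1
    · subst hi0
      rw [hbd 0 (by omega) (j + 1) (by omega) (Or.inl rfl),
        hbd 0 (by omega) j (by omega) (Or.inl rfl)]
      simp
    · have := hcpos i hi1 (Nat.lt_succ_iff.mp (mem_range.mp hi))
      have hk := khpos j hjN
      positivity
  -- first term rewritten with sums swapped
  have hswap : (∑ i ∈ range (M + 1), ∑ j ∈ range (N + 1),
      kcell j * (w (i + 1) j - w i j) ^ 2 / hhalf i)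
      = ∑ j ∈ range (N + 1), kcell j * S j := by
    rw [Finset.sum_comm]
    refine Finset.sum_congr rfl fun j _ => ?_
    rw [hS, Finset.mul_sum]
    exact Finset.sum_congr rfl fun i _ => by ring
  have hdrop : ∑ j ∈ range (N + 1), kcell j * S j = ∑ j ∈ Icc 1 N, kcell j * S j := by
    have h0 : S 0 = 0 := by
      apply Finset.sum_eq_zero
      intro p hp
      have hpM : p ≤ M := Nat.lt_succ_iff.mp (mem_range.mp hp)
      rw [hbd (p + 1) (by omega) 0 (by omega) (Or.inr (Or.inr (Or.inl rfl))),
        hbd p (by omega) 0 (by omega) (Or.inr (Or.inr (Or.inl rfl)))]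
      simp
    have : range (N + 1) = insert 0 (Icc 1 N) := by
      ext x; simp [Nat.lt_succ_iff]; omega
    rw [this, Finset.sum_insert (by simp), h0]
    ring_nf
  -- main bound
  have hmain : (∑ i ∈ Icc 1 M, ∑ j ∈ Icc 1 N, hcell i * kcell j * (w i j) ^ 2)
      ≤ ∑ j ∈ Icc 1 N, kcell j * S j := by
    rw [Finset.sum_comm]
    apply Finset.sum_le_sum
    intro j hj
    obtain ⟨hj1, hjN⟩ := mem_Icc.mp hj
    calc ∑ i ∈ Icc 1 M, hcell i * kcell j * (w i j) ^ 2
        ≤ ∑ i ∈ Icc 1 M, hcell i * (kcell j * S j) := by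
          apply Finset.sum_le_sum
          intro i hi
          obtain ⟨hi1, hiM⟩ := mem_Icc.mp hi
          have hw := key j hj1 hjN i hiM
          have hk := (kcpos j hj1 hjN).le
          have hh := (hcpos i hi1 hiM).le
          calc hcell i * kcell j * (w i j) ^ 2 ≤ hcell i * kcell j * S j := by
                apply mul_le_mul_of_nonneg_left hw (by positivity)
            _ = hcell i * (kcell j * S j) := by ring
      _ = kcell j * S j := by rw [← Finset.sum_mul, hsum, one_mul]
  calc (∑ i ∈ Icc 1 M, ∑ j ∈ Icc 1 N, hcell i * kcell j * (w i j) ^ 2)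
      ≤ ∑ j ∈ Icc 1 N, kcell j * S j := hmain
    _ = ∑ i ∈ range (M + 1), ∑ j ∈ range (N + 1),
        kcell j * (w (i + 1) j - w i j) ^ 2 / hhalf i := by rw [hswap, hdrop]
    _ ≤ _ := le_add_of_nonneg_right hterm2
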